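/- arXiv:math/0606628 — 11 statements merged into one kernel-verified Lean document; each statement's English description precedes it below -/
import Mathlib

section
/- Let A be an associative (unital) algebra over a field k of characteristic not 2 or 3, with a vector space decomposition A = A0 ⊕ A1 such that A0·A0 ⊆ A0, A0·A1 + A1·A0 ⊆ A1, and A1·A1 = 0 (an associative Z2-algebra). Define the bullet product on A by x • y := (1/2)(x·y0 + y0·x), where y = y0 + y1 with y0 ∈ A0, y1 ∈ A1. Then (A, +, •) is a right unital generalized Jordan algebra: • is bilinear, right commutative (x•(y•z) = x•(z•y) for all x, y, z ∈ A), satisfies the Jordan identity (y•x)•(x•x) = (y•(x•x))•x and the Hu-Liu bullet identity x•(y•(x•x)) − (x•y)•(x•x) = 2(x•x)•(y•x) − 2((x•x)•y)•x for all x, y ∈ A, and the identity element 1 of A is a right unit: x • 1 = x for all x ∈ A. -/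
/-- The bullet product on an associative `Z₂`-algebra, where `p` is the
linear projection onto the even part `A₀`: `x • y = (1/2)(x·y₀ + y₀·x)`. -/
def bulletProd {k A : Type*} [Field k] [Ring A] [Algebra k A]
    (p : A →ₗ[k] A) (x y : A) : A :=
  (1 / 2 : k) • (x * p y + p y * x)

/-- If `A = A₀ ⊕ A₁` is an associative `Z₂`-algebra over a field of characteristic
not `2` or `3`, then `(A, +, •)` with `x • y = (1/2)(x·y₀ + y₀·x)` is a right unital
generalized Jordan algebra. -/
theorem assoc_Z2_gives_generalized_Jordan
    (k : Type*) [Field k] (h2 : (2 : k) ≠ 0) (h3 : (3 : k) ≠ 0)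
    (A : Type*) [Ring A] [Algebra k A]
    (A0 A1 : Submodule k A) (p : A →ₗ[k] A)
    (hp0 : ∀ a : A, p a ∈ A0) (hp1 : ∀ a : A, a - p a ∈ A1)
    (hproj : ∀ y0 ∈ A0, ∀ y1 ∈ A1, p (y0 + y1) = y0)
    (h00 : ∀ a ∈ A0, ∀ b ∈ A0, a * b ∈ A0)
    (h01 : ∀ a ∈ A0, ∀ b ∈ A1, a * b ∈ A1)
    (h10 : ∀ a ∈ A1, ∀ b ∈ A0, a * b ∈ A1)
    (h11 : ∀ a ∈ A1, ∀ b ∈ A1, a * b = 0) :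
    -- bilinearity of the bullet product
    (∀ x y z : A, bulletProd p (x + y) z = bulletProd p x z + bulletProd p y z) ∧
    (∀ x y z : A, bulletProd p x (y + z) = bulletProd p x y + bulletProd p x z) ∧
    (∀ (c : k) (x y : A), bulletProd p (c • x) y = c • bulletProd p x y) ∧
    (∀ (c : k) (x y : A), bulletProd p x (c • y) = c • bulletProd p x y) ∧
    -- right commutativity
    (∀ x y z : A, bulletProd p x (bulletProd p y z) = bulletProd p x (bulletProd p z y)) ∧
    -- Jordan identity
    (∀ x y : A, bulletProd p (bulletProd p y x) (bulletProd p x x)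
      = bulletProd p (bulletProd p y (bulletProd p x x)) x) ∧
    -- Hu-Liu bullet identity
    (∀ x y : A, bulletProd p x (bulletProd p y (bulletProd p x x))
        - bulletProd p (bulletProd p x y) (bulletProd p x x)
      = (2 : k) • bulletProd p (bulletProd p x x) (bulletProd p y x)
        - (2 : k) • bulletProd p (bulletProd p (bulletProd p x x) y) x) ∧
    -- `1` is a right unit
    (∀ x : A, bulletProd p x 1 = x) := by
  -- p fixes A0
  have pfix : ∀ a ∈ A0, p a = a := by
    intro a ha
    have := hproj a ha 0 (zero_mem A1)
    simpa using this
  -- p kills A1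
  have pkill : ∀ a ∈ A1, p a = 0 := by
    intro a ha
    have := hproj 0 (zero_mem A0) a ha
    simpa using this
  have pr : ∀ a ∈ A0, ∀ x : A, p (x * a) = p x * a := by
    intro a ha x
    have hd : x * a = p x * a + (x - p x) * a := by rw [sub_mul]; abel
    rw [hd]
    exact hproj _ (h00 _ (hp0 x) _ ha) _ (h10 _ (hp1 x) _ ha)
  have pl : ∀ a ∈ A0, ∀ x : A, p (a * x) = a * p x := by
    intro a ha x
    have hd : a * x = a * p x + a * (x - p x) := by rw [mul_sub]; abel
    rw [hd]
    exact hproj _ (h00 _ ha _ (hp0 x)) _ (h01 _ ha _ (hp1 x))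
  have hpxy : ∀ x y : A, p (x * p y) = p x * p y := fun x y => pr _ (hp0 y) x
  have hpyx : ∀ x y : A, p (p y * x) = p y * p x := fun x y => pl _ (hp0 y) x
  have hpxy2 : ∀ x a b : A, p (x * (p a * p b)) = p x * (p a * p b) :=
    fun x a b => pr _ (h00 _ (hp0 a) _ (hp0 b)) x
  have hpyx2 : ∀ x a b : A, p (p a * p b * x) = p a * p b * p x :=
    fun x a b => pl _ (h00 _ (hp0 a) _ (hp0 b)) x
  have hpyx3 : ∀ x a b : A, p (p a * (p b * x)) = p a * (p b * p x) := by
    intro x a b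
    rw [← mul_assoc, hpyx2, mul_assoc]
  have hpp : ∀ x : A, p (p x) = p x := fun x => pfix _ (hp0 x)
  -- p 1 = 1
  have hp1' : p 1 = 1 := by
    set e := p 1 with he
    set f := (1 : A) - p 1 with hfdef
    have hf : f ∈ A1 := hp1 1
    have hee : p (e * e) = e * e := pfix _ (h00 _ (hp0 1) _ (hp0 1))
    have h1 : e * e + e * f = e := by rw [hfdef]; noncomm_ring
    have h2' : e * e = e := by
      have := hproj (e * e) (h00 _ (hp0 1) _ (hp0 1)) (e * f) (h01 _ (hp0 1) _ hf)
      rw [h1] at this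
      rw [← this, hpp]
    have h3' : e * e + f * e = e := by rw [hfdef]; noncomm_ring
    have h4' : f * e = 0 := by
      have := h3'; rw [h2'] at this; linear_combination (norm := abel) this
    have h5' : f = f * e + f * f := by rw [hfdef]; noncomm_ring
    have h6' : f = 0 := by rw [h5', h4', h11 f hf f hf, add_zero]
    have : (1 : A) - e = 0 := h6'
    linear_combination (norm := abel) -this
  refine ⟨?_, ?_, ?_, ?_, ?_, ?_, ?_, ?_⟩
  · intro x y z
    simp only [bulletProd, add_mul, mul_add, smul_add]
    module
  · intro x y z
    simp only [bulletProd, map_add, add_mul, mul_add, smul_add]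
    module
  · intro c x y
    simp only [bulletProd, smul_mul_assoc, mul_smul_comm, smul_add, smul_smul]
    module
  · intro c x y
    simp only [bulletProd, map_smul, smul_mul_assoc, mul_smul_comm, smul_add, smul_smul]
    module
  · intro x y z
    simp only [bulletProd, map_smul, map_add, hpxy, hpyx, hpxy2, hpyx2, hpyx3, hpp, smul_add, smul_smul,
      smul_mul_assoc, mul_smul_comm, add_mul, mul_add, mul_assoc]
    module
  · intro x y
    simp only [bulletProd, map_smul, map_add, hpxy, hpyx, hpxy2, hpyx2, hpyx3, hpp, smul_add, smul_smul,
      smul_mul_assoc, mul_smul_comm, add_mul, mul_add, mul_assoc]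
    module
  · intro x y
    simp only [bulletProd, map_smul, map_add, hpxy, hpyx, hpxy2, hpyx2, hpyx3, hpp, smul_add, smul_smul,
      smul_mul_assoc, mul_smul_comm, add_mul, mul_add, mul_assoc]
    module
  · intro x
    simp only [bulletProd, hp1', mul_one, one_mul]
    rw [← two_smul k x, smul_smul, one_div, inv_mul_cancel₀ h2, one_smul]
end

section
/- Let (J, +, •) be a generalized Jordan algebra over a field k of characteristic not 2 or 3, and let J^ann be the k-linear span of the set {x•y − y•x : x, y ∈ J}. Then J^ann is an ideal of J, i.e., J^ann • J ⊆ J^ann and J • J^ann ⊆ J^ann. -/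
/-- In a generalized Jordan algebra `(J, +, •)` over a field of characteristic not
`2` or `3`, the annihilator `J^ann` (the span of all commutators `x•y − y•x`) is an
ideal: `J^ann • J ⊆ J^ann` and `J • J^ann ⊆ J^ann`. -/
theorem annihilator_isIdeal_of_generalizedJordan
    (k : Type*) [Field k] (h2 : (2 : k) ≠ 0) (h3 : (3 : k) ≠ 0)
    (J : Type*) [AddCommGroup J] [Module k J]
    (mul : J →ₗ[k] J →ₗ[k] J)
    (rc : ∀ x y z : J, mul x (mul y z) = mul x (mul z y))
    (jordan : ∀ x y : J, mul (mul y x) (mul x x) = mul (mul y (mul x x)) x)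
    (huliu : ∀ x y : J, mul x (mul y (mul x x)) - mul (mul x y) (mul x x)
      = (2 : k) • mul (mul x x) (mul y x) - (2 : k) • mul (mul (mul x x) y) x)
    (Jann : Submodule k J)
    (hJann : Jann = Submodule.span k {a : J | ∃ x y : J, a = mul x y - mul y x}) :
    ∀ u ∈ Jann, ∀ x : J, mul u x ∈ Jann ∧ mul x u ∈ Jann := by
  have hz : ∀ x : J, ∀ u ∈ Jann, mul x u = 0 := by
    intro x u hu
    rw [hJann] at hu
    induction hu using Submodule.span_induction with
    | mem a ha =>
        obtain ⟨y, z, rfl⟩ := ha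
        rw [map_sub, rc, sub_self]
    | zero => exact map_zero _
    | add a b _ _ ha hb => rw [map_add, ha, hb, add_zero]
    | smul c a _ ha => rw [map_smul, ha, smul_zero]
  intro u hu x
  have h0 : mul x u = 0 := hz x u hu
  constructor
  · have h1 : mul u x - mul x u ∈ Jann := by
      rw [hJann]; exact Submodule.subset_span ⟨u, x, rfl⟩
    rwa [h0, sub_zero] at h1
  · rw [h0]; exact Jann.zero_mem
end

section
/- Let (J, +, •) be a generalized Jordan algebra over a field k of characteristic not 2 or 3, and let J^ann be the k-linear span of {x•y − y•x : x, y ∈ J}. Then the quotient vector space J/J^ann, with the induced product (x + J^ann)•(y + J^ann) := x•y + J^ann (which is well defined since J^ann is an ideal), is a Jordan algebra: the induced product is commutative and satisfies the Jordan identity ((y•x)•(x•x)) = ((y•(x•x))•x) in J/J^ann. -/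
/-- For a generalized Jordan algebra `(J, +, •)` over a field of characteristic not
`2` or `3` with annihilator `J^ann = span{x•y − y•x}`, the quotient `J/J^ann`
carries a well-defined induced bilinear product `(x̄)•(ȳ) = (x•y)‾` which is
commutative and satisfies the Jordan identity, i.e. `J/J^ann` is a Jordan algebra. -/
theorem quotient_by_annihilator_isJordan
    (k : Type*) [Field k] (h2 : (2 : k) ≠ 0) (h3 : (3 : k) ≠ 0)
    (J : Type*) [AddCommGroup J] [Module k J]
    (mul : J →ₗ[k] J →ₗ[k] J)
    (rc : ∀ x y z : J, mul x (mul y z) = mul x (mul z y))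
    (jordan : ∀ x y : J, mul (mul y x) (mul x x) = mul (mul y (mul x x)) x)
    (huliu : ∀ x y : J, mul x (mul y (mul x x)) - mul (mul x y) (mul x x)
      = (2 : k) • mul (mul x x) (mul y x) - (2 : k) • mul (mul (mul x x) y) x)
    (Jann : Submodule k J)
    (hJann : Jann = Submodule.span k {a : J | ∃ x y : J, a = mul x y - mul y x}) :
    ∃ qmul : (J ⧸ Jann) →ₗ[k] (J ⧸ Jann) →ₗ[k] (J ⧸ Jann),
      -- the induced product is well defined: it is computed on representatives
      (∀ x y : J, qmul (Submodule.Quotient.mk x) (Submodule.Quotient.mk y)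
          = (Submodule.Quotient.mk (mul x y) : J ⧸ Jann)) ∧
      -- commutativity
      (∀ a b : J ⧸ Jann, qmul a b = qmul b a) ∧
      -- Jordan identity
      (∀ a b : J ⧸ Jann, qmul (qmul b a) (qmul a a) = qmul (qmul b (qmul a a)) a) := by
  -- commutators lie in Jann
  have hcomm : ∀ x y : J, mul x y - mul y x ∈ Jann := by
    intro x y
    rw [hJann]
    exact Submodule.subset_span ⟨x, y, rfl⟩
  -- left multiplication kills Jann (by right commutativity)
  have hleft : ∀ z : J, ∀ a ∈ Jann, mul z a = 0 := by
    intro z a ha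
    rw [hJann] at ha
    refine Submodule.span_induction (p := fun a _ => mul z a = 0) ?_ ?_ ?_ ?_ ha
    · rintro a ⟨x, y, rfl⟩
      simp [map_sub, rc z x y]
    · simp
    · intro a b _ _ ha hb; simp [map_add, ha, hb]
    · intro c a _ ha; simp [map_smul, ha]
  -- right multiplication maps Jann into Jann
  have hright : ∀ a ∈ Jann, ∀ z : J, mul a z ∈ Jann := by
    intro a ha z
    have h := hcomm a z
    rw [hleft z a ha, sub_zero] at h
    exact h
  -- second-variable descent
  have hker : ∀ x : J, Jann ≤ LinearMap.ker (Jann.mkQ ∘ₗ mul x) := by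
    intro x a ha
    simp [LinearMap.mem_ker, hleft x a ha]
  -- the family of lifted maps, linear in x
  let f : J →ₗ[k] (J ⧸ Jann) →ₗ[k] (J ⧸ Jann) :=
    { toFun := fun x => Submodule.liftQ Jann (Jann.mkQ ∘ₗ mul x) (hker x)
      map_add' := by
        intro x x'
        refine LinearMap.ext fun b => ?_
        obtain ⟨y, rfl⟩ := Submodule.Quotient.mk_surjective _ b
        simp [map_add]
      map_smul' := by
        intro c x
        refine LinearMap.ext fun b => ?_
        obtain ⟨y, rfl⟩ := Submodule.Quotient.mk_surjective _ b
        simp [map_smul] }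
  have hf : ∀ x y : J, f x (Submodule.Quotient.mk y) = Submodule.Quotient.mk (mul x y) := by
    intro x y; simp [f]
  -- first-variable descent
  have hker2 : Jann ≤ LinearMap.ker f := by
    intro a ha
    simp only [LinearMap.mem_ker]
    refine LinearMap.ext fun b => ?_
    obtain ⟨y, rfl⟩ := Submodule.Quotient.mk_surjective _ b
    rw [hf]
    simpa [Submodule.Quotient.mk_eq_zero] using hright a ha y
  refine ⟨Submodule.liftQ Jann f hker2, ?_, ?_, ?_⟩
  · intro x y
    simp [hf]
  · intro a b
    obtain ⟨x, rfl⟩ := Submodule.Quotient.mk_surjective _ a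
    obtain ⟨y, rfl⟩ := Submodule.Quotient.mk_surjective _ b
    simp only [Submodule.liftQ_apply, hf]
    rw [Submodule.Quotient.eq]
    exact hcomm x y
  · intro a b
    obtain ⟨x, rfl⟩ := Submodule.Quotient.mk_surjective _ a
    obtain ⟨y, rfl⟩ := Submodule.Quotient.mk_surjective _ b
    simp only [Submodule.liftQ_apply, hf, jordan x y]
end

section
/- Let (J, +, •) be a right unital generalized Jordan algebra over a field k of characteristic not 2 or 3, with right unit 1 (so x•1 = x for all x ∈ J), and let J^ann be the k-linear span of {x•y − y•x : x, y ∈ J}. Then J^ann = {a ∈ J : 1•a = 0}. -/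
/-- In a right unital generalized Jordan algebra `(J, +, •)` over a field of
characteristic not `2` or `3` with right unit `1`, the annihilator
`J^ann = span{x•y − y•x}` equals `{a ∈ J : 1•a = 0}`. -/
theorem annihilator_eq_kernel_of_leftMul_by_right_unit
    (k : Type*) [Field k] (h2 : (2 : k) ≠ 0) (h3 : (3 : k) ≠ 0)
    (J : Type*) [AddCommGroup J] [Module k J]
    (mul : J →ₗ[k] J →ₗ[k] J)
    (rc : ∀ x y z : J, mul x (mul y z) = mul x (mul z y))
    (jordan : ∀ x y : J, mul (mul y x) (mul x x) = mul (mul y (mul x x)) x)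
    (huliu : ∀ x y : J, mul x (mul y (mul x x)) - mul (mul x y) (mul x x)
      = (2 : k) • mul (mul x x) (mul y x) - (2 : k) • mul (mul (mul x x) y) x)
    (one : J) (hone : ∀ x : J, mul x one = x)
    (Jann : Submodule k J)
    (hJann : Jann = Submodule.span k {a : J | ∃ x y : J, a = mul x y - mul y x}) :
    ∀ a : J, a ∈ Jann ↔ mul one a = 0 := by
  intro a
  constructor
  · intro ha
    rw [hJann] at ha
    have hsub : Submodule.span k {a : J | ∃ x y : J, a = mul x y - mul y x}
        ≤ LinearMap.ker (mul one) := by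
      rw [Submodule.span_le]
      rintro _ ⟨x, y, rfl⟩
      simp [LinearMap.mem_ker, map_sub, rc one x y]
    exact hsub ha
  · intro ha
    rw [hJann]
    exact Submodule.subset_span ⟨a, one, by rw [hone, ha, sub_zero]⟩
end

section
/- Let (J, +, •) be a right unital generalized Jordan algebra over a field k of characteristic not 2 or 3, with right unit 1, and let J^ann be the k-linear span of {x•y − y•x : x, y ∈ J}. Then the set of all right units of J equals {1 + a : a ∈ J^ann}; that is, an element e ∈ J satisfies x•e = x for all x ∈ J if and only if e − 1 ∈ J^ann. -/
/-- In a right unital generalized Jordan algebra `(J, +, •)` over a field of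
characteristic not `2` or `3` with right unit `1`, the set of all right units is
`{1 + a : a ∈ J^ann}`: an element `e` is a right unit iff `e − 1 ∈ J^ann`,
where `J^ann = span{x•y − y•x}`. -/
theorem right_units_eq_one_add_annihilator
    (k : Type*) [Field k] (h2 : (2 : k) ≠ 0) (h3 : (3 : k) ≠ 0)
    (J : Type*) [AddCommGroup J] [Module k J]
    (mul : J →ₗ[k] J →ₗ[k] J)
    (rc : ∀ x y z : J, mul x (mul y z) = mul x (mul z y))
    (jordan : ∀ x y : J, mul (mul y x) (mul x x) = mul (mul y (mul x x)) x)
    (huliu : ∀ x y : J, mul x (mul y (mul x x)) - mul (mul x y) (mul x x)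
      = (2 : k) • mul (mul x x) (mul y x) - (2 : k) • mul (mul (mul x x) y) x)
    (one : J) (hone : ∀ x : J, mul x one = x)
    (Jann : Submodule k J)
    (hJann : Jann = Submodule.span k {a : J | ∃ x y : J, a = mul x y - mul y x}) :
    ∀ e : J, (∀ x : J, mul x e = x) ↔ e - one ∈ Jann := by
  intro e
  constructor
  · intro he
    rw [hJann]
    exact Submodule.subset_span ⟨e, one, by rw [hone e, he one]⟩
  · intro he x
    have key : Jann ≤ LinearMap.ker (mul x) := by
      rw [hJann, Submodule.span_le]
      rintro a ⟨y, z, rfl⟩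
      simp [LinearMap.mem_ker, rc x y z]
    have h0 : mul x (e - one) = 0 := key he
    rw [map_sub, sub_eq_zero, hone x] at h0
    exact h0
end

section
/- Let (J, +, •) be a generalized Jordan algebra over a field k of characteristic not 2 or 3, and let J^ann be the k-linear span of {x•y − y•x : x, y ∈ J}. On the vector space E := (J/J^ann) × J^ann define the product (x̄, u)∘(ȳ, v) := (x•y + J^ann, u•y + v•x), where x̄ = x + J^ann and ȳ = y + J^ann. Then this product is well defined (independent of the chosen representatives x and y), and E is a Jordan algebra: ∘ is bilinear, commutative, and satisfies the Jordan identity (B∘A)∘(A∘A) = (B∘(A∘A))∘A for all A, B ∈ E. (Equivalently, J^ann is a bimodule over the Jordan algebra J/J^ann under the action x̄·u = u·x̄ := u•x.) -/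
set_option maxHeartbeats 1000000 in
/-- For a generalized Jordan algebra `(J, +, •)` over a field of characteristic not
`2` or `3` with annihilator `J^ann = span{x•y − y•x}`, the split null extension
`E = (J/J^ann) × J^ann` with product `(x̄, u)∘(ȳ, v) = ((x•y)‾, u•y + v•x)` is
well defined and is a Jordan algebra (equivalently, `J^ann` is a bimodule over
the Jordan algebra `J/J^ann` via `x̄·u = u·x̄ = u•x`). -/
theorem split_null_extension_isJordan
    (k : Type*) [Field k] (h2 : (2 : k) ≠ 0) (h3 : (3 : k) ≠ 0)
    (J : Type*) [AddCommGroup J] [Module k J]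
    (mul : J →ₗ[k] J →ₗ[k] J)
    (rc : ∀ x y z : J, mul x (mul y z) = mul x (mul z y))
    (jordan : ∀ x y : J, mul (mul y x) (mul x x) = mul (mul y (mul x x)) x)
    (huliu : ∀ x y : J, mul x (mul y (mul x x)) - mul (mul x y) (mul x x)
      = (2 : k) • mul (mul x x) (mul y x) - (2 : k) • mul (mul (mul x x) y) x)
    (Jann : Submodule k J)
    (hJann : Jann = Submodule.span k {a : J | ∃ x y : J, a = mul x y - mul y x}) :
    ∃ bmul : ((J ⧸ Jann) × Jann) →ₗ[k] ((J ⧸ Jann) × Jann) →ₗ[k] ((J ⧸ Jann) × Jann),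
      -- the product is well defined and given on representatives by
      -- `(x̄, u)∘(ȳ, v) = ((x•y)‾, u•y + v•x)`
      (∀ (x y : J) (u v : Jann),
        (bmul (Submodule.Quotient.mk x, u) (Submodule.Quotient.mk y, v)).1
            = (Submodule.Quotient.mk (mul x y) : J ⧸ Jann) ∧
        ((bmul (Submodule.Quotient.mk x, u) (Submodule.Quotient.mk y, v)).2 : J)
            = mul (u : J) y + mul (v : J) x) ∧
      -- commutativity
      (∀ a b : (J ⧸ Jann) × Jann, bmul a b = bmul b a) ∧
      -- Jordan identity
      (∀ a b : (J ⧸ Jann) × Jann,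
        bmul (bmul b a) (bmul a a) = bmul (bmul b (bmul a a)) a) := by
  classical
  -- anything multiplied by an element of `Jann` on the right is zero
  have h0 : ∀ u ∈ Jann, ∀ z : J, mul z u = 0 := by
    intro u hu z
    rw [hJann] at hu
    induction hu using Submodule.span_induction with
    | mem a ha =>
      obtain ⟨x, y, rfl⟩ := ha
      simp [rc z x y]
    | zero => simp
    | add a b _ _ ha hb => simp [ha, hb]
    | smul c a _ ha => simp [ha]
  -- `Jann` is a left ideal
  have hmem : ∀ u ∈ Jann, ∀ y : J, mul u y ∈ Jann := by
    intro u hu y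
    have h1 : mul u y = mul u y - mul y u := by rw [h0 u hu y, sub_zero]
    rw [h1, hJann]
    exact Submodule.subset_span ⟨u, y, rfl⟩
  have hcomm : ∀ x y : J, mul x y - mul y x ∈ Jann := by
    intro x y; rw [hJann]; exact Submodule.subset_span ⟨x, y, rfl⟩
  -- the induced product on the quotient
  let A2 : J →ₗ[k] ((J ⧸ Jann) →ₗ[k] (J ⧸ Jann)) :=
    { toFun := fun x => Jann.liftQ ((mul.compr₂ Jann.mkQ) x)
        (by intro u hu
            simp [LinearMap.mem_ker, h0 u hu x])
      map_add' := by
        intro a b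
        refine LinearMap.ext fun q => ?_
        obtain ⟨z, rfl⟩ := Submodule.Quotient.mk_surjective _ q
        simp
      map_smul' := by
        intro c a
        refine LinearMap.ext fun q => ?_
        obtain ⟨z, rfl⟩ := Submodule.Quotient.mk_surjective _ q
        simp }
  let A : (J ⧸ Jann) →ₗ[k] ((J ⧸ Jann) →ₗ[k] (J ⧸ Jann)) :=
    Jann.liftQ A2
      (by intro u hu
          rw [LinearMap.mem_ker]
          refine LinearMap.ext fun q => ?_
          obtain ⟨z, rfl⟩ := Submodule.Quotient.mk_surjective _ q
          simp only [A2, LinearMap.coe_mk, AddHom.coe_mk, Submodule.liftQ_apply,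
            LinearMap.compr₂_apply, Submodule.mkQ_apply, LinearMap.zero_apply]
          exact (Submodule.Quotient.mk_eq_zero _).2 (hmem u hu z))
  have hA : ∀ x y : J, A (Submodule.Quotient.mk x) (Submodule.Quotient.mk y)
      = (Submodule.Quotient.mk (mul x y) : J ⧸ Jann) := by
    intro x y; simp [A, A2]
  -- the action of `J/Jann` on `Jann`
  let B1 : Jann →ₗ[k] (J →ₗ[k] Jann) :=
    { toFun := fun u => LinearMap.codRestrict Jann (mul u) (fun y => hmem u u.2 y)
      map_add' := by
        intro a b
        refine LinearMap.ext fun y => Subtype.ext ?_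
        simp
      map_smul' := by
        intro c a
        refine LinearMap.ext fun y => Subtype.ext ?_
        simp }
  let B : Jann →ₗ[k] ((J ⧸ Jann) →ₗ[k] Jann) :=
    { toFun := fun u => Jann.liftQ (B1 u)
        (by intro c hc
            rw [LinearMap.mem_ker]
            exact Subtype.ext (by simp [B1, h0 c hc u]))
      map_add' := by
        intro a b
        refine LinearMap.ext fun q => ?_
        obtain ⟨z, rfl⟩ := Submodule.Quotient.mk_surjective _ q
        simp
      map_smul' := by
        intro c a
        refine LinearMap.ext fun q => ?_
        obtain ⟨z, rfl⟩ := Submodule.Quotient.mk_surjective _ q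
        simp }
  have hB : ∀ (u : Jann) (y : J),
      ((B u (Submodule.Quotient.mk y) : Jann) : J) = mul (u : J) y := by
    intro u y; simp [B, B1]
  -- the product on the split null extension
  refine ⟨LinearMap.mk₂ k
      (fun a b => (A a.1 b.1, B a.2 b.1 + B b.2 a.1))
      (by intro a a' b
          refine Prod.ext ?_ ?_ <;> simp <;> abel)
      (by intro c a b
          refine Prod.ext ?_ ?_ <;> simp [smul_add])
      (by intro a b b'
          refine Prod.ext ?_ ?_ <;> simp <;> abel)
      (by intro c a b
          refine Prod.ext ?_ ?_ <;> simp [smul_add]), ?_, ?_, ?_⟩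
  · intro x y u v
    constructor
    · simpa using hA x y
    · simp [hB]
  · rintro ⟨a1, u⟩ ⟨b1, v⟩
    obtain ⟨x, rfl⟩ := Submodule.Quotient.mk_surjective _ a1
    obtain ⟨y, rfl⟩ := Submodule.Quotient.mk_surjective _ b1
    refine Prod.ext ?_ ?_
    · simp only [LinearMap.mk₂_apply, hA]
      exact (Submodule.Quotient.eq _).2 (hcomm x y)
    · simp only [LinearMap.mk₂_apply]
      exact add_comm _ _
  · -- the Jordan identity
    have key : ∀ (x y u : J), u ∈ Jann →
        mul (mul u y) (mul x x) + mul (mul u x) (mul y x) + mul (mul u x) (mul y x)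
          = mul (mul (mul u x) y) x + mul (mul (mul u x) y) x + mul u (mul y (mul x x)) := by
      intro x y u hu
      have h0u := h0 u hu
      have h0w := h0 (mul u x) (hmem u hu x)
      have e1 := huliu (x + u) y
      have e2 := huliu x y
      simp only [map_add, LinearMap.add_apply, h0u, h0w, add_zero, zero_add,
        map_zero, LinearMap.zero_apply, smul_add] at e1
      linear_combination (norm := module) e2 - e1
    rintro ⟨a1, u⟩ ⟨b1, v⟩
    obtain ⟨x, rfl⟩ := Submodule.Quotient.mk_surjective _ a1
    obtain ⟨y, rfl⟩ := Submodule.Quotient.mk_surjective _ b1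
    refine Prod.ext ?_ ?_
    · simp only [LinearMap.mk₂_apply, hA]
      exact congrArg _ (jordan x y)
    · simp only [LinearMap.mk₂_apply]
      refine Subtype.ext ?_
      have hBadd : ∀ (w w' : Jann) (q : J ⧸ Jann),
          ((B (w + w') q : Jann) : J) = ((B w q : Jann) : J) + ((B w' q : Jann) : J) := by
        intro w w' q; simp
      simp only [Submodule.coe_add, hBadd, hA, hB, map_add, LinearMap.add_apply]
      have hv := jordan x (v : J)
      have hu := key x y (u : J) u.2
      linear_combination (norm := module) hv + hu
end

section
/- Let M be a vector space over a field k of characteristic not 2 or 3 with a bilinear bracket ⟨ , ⟩ that is anti-commutative: ⟨x, y⟩ = −⟨y, x⟩ for all x, y ∈ M. Then the identity ⟨⟨z,x⟩,⟨y,x⟩⟩ = ⟨⟨z,⟨x,y⟩⟩,x⟩ + ⟨⟨⟨z,y⟩,x⟩,x⟩ − ⟨⟨⟨z,x⟩,x⟩,y⟩ holds for all x, y, z ∈ M if and only if the Malcev identity ⟨⟨x,y⟩,⟨x,z⟩⟩ = ⟨⟨⟨x,y⟩,z⟩,x⟩ + ⟨⟨⟨y,z⟩,x⟩,x⟩ +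 ⟨⟨⟨z,x⟩,x⟩,y⟩ holds for all x, y, z ∈ M. In particular, every Malcev algebra is a generalized Malcev algebra. -/
/-- For an anti-commutative bilinear bracket over a field of characteristic not `2`
or `3`, the third Hu-Liu angle identity is equivalent to the Malcev identity; in
particular (second conjunct) every Malcev algebra is a generalized Malcev algebra:
the bracket is right anti-commutative and satisfies the three Hu-Liu angle
identities. -/
theorem third_angle_identity_iff_malcev_of_anticomm
    (k : Type*) [Field k] (h2 : (2 : k) ≠ 0) (h3 : (3 : k) ≠ 0)
    (M : Type*) [AddCommGroup M] [Module k M]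
    (br : M →ₗ[k] M →ₗ[k] M)
    (anticomm : ∀ x y : M, br x y = - br y x) :
    ((∀ x y z : M,
      br (br z x) (br y x)
        = br (br z (br x y)) x + br (br (br z y) x) x - br (br (br z x) x) y)
    ↔
    (∀ x y z : M,
      br (br x y) (br x z)
        = br (br (br x y) z) x + br (br (br y z) x) x + br (br (br z x) x) y)) ∧
    -- in particular, every Malcev algebra is a generalized Malcev algebra:
    ((∀ x y z : M,
      br (br x y) (br x z)
        = br (br (br x y) z) x + br (br (br y z) x) x + br (br (br z x) x) y) →
      -- right anti-commutativity
      (∀ x y z : M, br x (br y z) = - br x (br z y)) ∧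
      -- Hu-Liu angle identity (i)
      (∀ x y z : M,
        br (br x y) (br x z) - br (br x z) (br x y)
          = br (br (br x y) z) x - br x (br (br x y) z)
            + br x (br x (br y z)) - br (br x (br y z)) x
            + br (br x (br x z)) y - br (br (br x z) x) y) ∧
      -- Hu-Liu angle identity (ii)
      (∀ x y z : M,
        br (br y x) (br x z)
          = br (br (br y x) z) x - br y (br (br x z) x) - br (br (br y z) x) x) ∧
      -- Hu-Liu angle identity (iii)
      (∀ x y z : M,
        br (br z x) (br y x)
          = br (br z (br x y)) x + br (br (br z y) x) x - br (br (br z x) x) y)) := by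
  have L1 : ∀ a b c : M, br (br a b) c = - br (br b a) c := by
    intro a b c; rw [anticomm a b]; simp
  have L2 : ∀ a b c : M, br a (br b c) = - br a (br c b) := by
    intro a b c; rw [anticomm b c]; simp
  have e1 : ∀ x y z : M, br (br x y) (br x z) = - br (br z x) (br y x) := by
    intro x y z
    rw [L1 x y (br x z), L2 (br y x) x z, anticomm (br y x) (br z x)]; simp
  have e2 : ∀ x y z : M, br (br (br x y) z) x = - br (br z (br x y)) x := by
    intro x y z; rw [L1 (br x y) z x]
  have e3 : ∀ x y z : M, br (br (br y z) x) x = - br (br (br z y) x) x := by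
    intro x y z; rw [L1 y z x]; simp
  have key : ∀ x y z : M,
      (br (br z x) (br y x)
        = br (br z (br x y)) x + br (br (br z y) x) x - br (br (br z x) x) y) ↔
      (br (br x y) (br x z)
        = br (br (br x y) z) x + br (br (br y z) x) x + br (br (br z x) x) y) := by
    intro x y z
    rw [e1 x y z, e2 x y z, e3 x y z]
    constructor <;> intro t <;> linear_combination (norm := abel) -t
  refine ⟨⟨fun h x y z => (key x y z).mp (h x y z),
           fun h x y z => (key x y z).mpr (h x y z)⟩, fun hM => ?_⟩
  refine ⟨fun x y z => L2 x y z, ?_, ?_, fun x y z => (key x y z).mpr (hM x y z)⟩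
  · intro x y z
    have c1 : br (br x z) (br x y) = - br (br x y) (br x z) :=
      anticomm (br x z) (br x y)
    have c2 : br x (br (br x y) z) = - br (br (br x y) z) x :=
      anticomm x (br (br x y) z)
    have c3 : br x (br x (br y z)) = br (br (br y z) x) x := by
      rw [L2 x x (br y z), anticomm x (br (br y z) x)]; simp
    have c4 : br (br x (br y z)) x = - br (br (br y z) x) x := L1 x (br y z) x
    have c5 : br (br x (br x z)) y = br (br (br z x) x) y := by
      have h' : br x (br x z) = br (br z x) x := by
        rw [L2 x x z, anticomm x (br z x)]; simp
      rw [h']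
    have c6 : br (br (br x z) x) y = - br (br (br z x) x) y := by
      rw [L1 x z x]; simp
    rw [c1, c2, c3, c4, c5, c6, hM x y z]; abel
  · intro x y z
    have d1 : br (br y x) (br x z) = - br (br x y) (br x z) := L1 y x (br x z)
    have d2 : br (br (br y x) z) x = - br (br (br x y) z) x := by
      rw [L1 y x z]; simp
    have d3 : br y (br (br x z) x) = br (br (br z x) x) y := by
      rw [anticomm y (br (br x z) x), L1 x z x]; simp
    rw [d1, d2, d3, hM x y z]; abel
end

section
/- Let A be an alternative algebra over a field k of characteristic not 2 or 3 (i.e., x(xy) = (xx)y and (yx)x = y(xx) for all x, y ∈ A), with a vector space decomposition A = A0 ⊕ A1 such that A0·A0 ⊆ A0, A0·A1 + A1·A0 ⊆ A1, and A1·A1 = 0 (an alternative Z2-algebra). Define the angle bracket on A by ⟨x, y⟩ := x·y0 − y0·x, where y = y0 + y1 with y0 ∈ A0, y1 ∈ A1. Then (A, +, ⟨ , ⟩) is a generalized Malcev algebra: ⟨ , ⟩ is bilinear, right anti-commutative (⟨x, ⟨y, z⟩⟩ = −⟨x, ⟨z, y⟩⟩), and satisfies the three Hu-Liu angle identities: (i)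 ⟨⟨x,y⟩,⟨x,z⟩⟩ − ⟨⟨x,z⟩,⟨x,y⟩⟩ = ⟨⟨⟨x,y⟩,z⟩,x⟩ − ⟨x,⟨⟨x,y⟩,z⟩⟩ + ⟨x,⟨x,⟨y,z⟩⟩⟩ − ⟨⟨x,⟨y,z⟩⟩,x⟩ + ⟨⟨x,⟨x,z⟩⟩,y⟩ − ⟨⟨⟨x,z⟩,x⟩,y⟩; (ii) ⟨⟨y,x⟩,⟨x,z⟩⟩ = ⟨⟨⟨y,x⟩,z⟩,x⟩ − ⟨y,⟨⟨x,z⟩,x⟩⟩ − ⟨⟨⟨y,z⟩,x⟩,x⟩; (iii) ⟨⟨z,x⟩,⟨y,x⟩⟩ = ⟨⟨z,⟨x,y⟩⟩,x⟩ + ⟨⟨⟨z,y⟩,x⟩,x⟩ − ⟨⟨⟨z,x⟩,x⟩,y⟩, for all x, y, z ∈ A. -/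
/-- The angle bracket on an alternative `Z₂`-algebra, where `p` is the linear
projection onto the even part `A₀`: `⟨x, y⟩ = x·y₀ − y₀·x`. -/
def angleBracket {k A : Type*} [Field k] [NonUnitalNonAssocRing A] [Module k A]
    (p : A →ₗ[k] A) (x y : A) : A :=
  x * p y - p y * x

/-- If `A = A₀ ⊕ A₁` is an alternative `Z₂`-algebra over a field of characteristic
not `2` or `3`, then `(A, +, ⟨,⟩)` with `⟨x, y⟩ = x·y₀ − y₀·x` is a generalized
Malcev algebra: the bracket is bilinear, right anti-commutative, and satisfies the
three Hu-Liu angle identities. -/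
theorem alternative_Z2_gives_generalized_Malcev
    (k : Type*) [Field k] (h2 : (2 : k) ≠ 0) (h3 : (3 : k) ≠ 0)
    (A : Type*) [NonUnitalNonAssocRing A] [Module k A]
    [SMulCommClass k A A] [IsScalarTower k A A]
    -- `A` is alternative
    (haltl : ∀ x y : A, x * (x * y) = (x * x) * y)
    (haltr : ∀ x y : A, (y * x) * x = y * (x * x))
    -- `A = A₀ ⊕ A₁` with `p` the projection onto `A₀`
    (A0 A1 : Submodule k A) (p : A →ₗ[k] A)
    (hp0 : ∀ a : A, p a ∈ A0) (hp1 : ∀ a : A, a - p a ∈ A1)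
    (hproj : ∀ y0 ∈ A0, ∀ y1 ∈ A1, p (y0 + y1) = y0)
    (h00 : ∀ a ∈ A0, ∀ b ∈ A0, a * b ∈ A0)
    (h01 : ∀ a ∈ A0, ∀ b ∈ A1, a * b ∈ A1)
    (h10 : ∀ a ∈ A1, ∀ b ∈ A0, a * b ∈ A1)
    (h11 : ∀ a ∈ A1, ∀ b ∈ A1, a * b = 0) :
    -- bilinearity of the angle bracket
    (∀ x y z : A, angleBracket p (x + y) z = angleBracket p x z + angleBracket p y z) ∧
    (∀ x y z : A, angleBracket p x (y + z) = angleBracket p x y + angleBracket p x z) ∧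
    (∀ (c : k) (x y : A), angleBracket p (c • x) y = c • angleBracket p x y) ∧
    (∀ (c : k) (x y : A), angleBracket p x (c • y) = c • angleBracket p x y) ∧
    -- right anti-commutativity
    (∀ x y z : A, angleBracket p x (angleBracket p y z)
      = - angleBracket p x (angleBracket p z y)) ∧
    -- Hu-Liu angle identity (i)
    (∀ x y z : A,
      angleBracket p (angleBracket p x y) (angleBracket p x z)
          - angleBracket p (angleBracket p x z) (angleBracket p x y)
        = angleBracket p (angleBracket p (angleBracket p x y) z) x
          - angleBracket p x (angleBracket p (angleBracket p x y) z)
          + angleBracket p x (angleBracket p x (angleBracket p y z))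
          - angleBracket p (angleBracket p x (angleBracket p y z)) x
          + angleBracket p (angleBracket p x (angleBracket p x z)) y
          - angleBracket p (angleBracket p (angleBracket p x z) x) y) ∧
    -- Hu-Liu angle identity (ii)
    (∀ x y z : A,
      angleBracket p (angleBracket p y x) (angleBracket p x z)
        = angleBracket p (angleBracket p (angleBracket p y x) z) x
          - angleBracket p y (angleBracket p (angleBracket p x z) x)
          - angleBracket p (angleBracket p (angleBracket p y z) x) x) ∧
    -- Hu-Liu angle identity (iii)
    (∀ x y z : A,
      angleBracket p (angleBracket p z x) (angleBracket p y x)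
        = angleBracket p (angleBracket p z (angleBracket p x y)) x
          + angleBracket p (angleBracket p (angleBracket p z y) x) x
          - angleBracket p (angleBracket p (angleBracket p z x) x) y) := by
  have pbrA0 : ∀ u w : A, w ∈ A0 → p (u * w - w * u) = p u * w - w * p u := by
    intro u w hw
    have hd : u * w - w * u
        = (p u * w - w * p u) + ((u - p u) * w - w * (u - p u)) := by
      simp only [mul_sub, sub_mul]; abel
    rw [hd]
    exact hproj _ (sub_mem (h00 _ (hp0 u) _ hw) (h00 _ hw _ (hp0 u)))
      _ (sub_mem (h10 _ (hp1 u) _ hw) (h01 _ hw _ (hp1 u)))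
  have pbr : ∀ u v : A, p (u * p v - p v * u) = p u * p v - p v * p u :=
    fun u v => pbrA0 u (p v) (hp0 v)
  have pbr2 : ∀ u a b : A, p (u * (p a * p b - p b * p a) - (p a * p b - p b * p a) * u)
      = p u * (p a * p b - p b * p a) - (p a * p b - p b * p a) * p u :=
    fun u a b => pbrA0 u _
      (sub_mem (h00 _ (hp0 a) _ (hp0 b)) (h00 _ (hp0 b) _ (hp0 a)))
  have hA : ∀ u v w : A, (u*v)*w + (v*u)*w = u*(v*w) + v*(u*w) := by
    intro u v w
    have h := haltl (u+v) w
    simp only [add_mul, mul_add] at h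
    linear_combination (norm := abel1) - h + haltl u w + haltl v w
  have hB : ∀ u v w : A, (u*v)*w + (u*w)*v = u*(v*w) + u*(w*v) := by
    intro u v w
    have h := haltr (v+w) u
    simp only [add_mul, mul_add] at h
    linear_combination (norm := abel1) h - haltr v u - haltr w u
  have hAL : ∀ m u v w : A,
      m*((u*v)*w) + m*((v*u)*w) = m*(u*(v*w)) + m*(v*(u*w)) := fun m u v w => by
    rw [← mul_add, ← mul_add, hA]
  have hAR : ∀ m u v w : A,
      ((u*v)*w)*m + ((v*u)*w)*m = (u*(v*w))*m + (v*(u*w))*m := fun m u v w => by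
    simpa only [add_mul] using congrArg (· * m) (hA u v w)
  have hBL : ∀ m u v w : A,
      m*((u*v)*w) + m*((u*w)*v) = m*(u*(v*w)) + m*(u*(w*v)) := fun m u v w => by
    rw [← mul_add, ← mul_add, hB]
  have hBR : ∀ m u v w : A,
      ((u*v)*w)*m + ((u*w)*v)*m = (u*(v*w))*m + (u*(w*v))*m := fun m u v w => by
    simpa only [add_mul] using congrArg (· * m) (hB u v w)
  refine ⟨?_, ?_, ?_, ?_, ?_, ?_, ?_, ?_⟩
  · intro x y z
    simp only [angleBracket, add_mul, mul_add]; abel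
  · intro x y z
    simp only [angleBracket, map_add, add_mul, mul_add]; abel
  · intro c x y
    simp only [angleBracket, smul_mul_assoc, mul_smul_comm, smul_sub]
  · intro c x y
    simp only [angleBracket, map_smul, smul_mul_assoc, mul_smul_comm, smul_sub]
  · intro x y z
    simp only [angleBracket, pbr, mul_sub, sub_mul, neg_sub]
    abel
  · intro x y z
    simp only [angleBracket, pbr, pbr2]
    simp only [mul_sub, sub_mul, mul_add, add_mul]
    linear_combination (norm := abel1) (-3:ℤ) • hA ((p x) * (p z)) x (p y) + (10:ℤ) • hB ((p x) * (p z)) x (p y) + (-3:ℤ) • hA ((p z) * (p x)) x (p y) + (2:ℤ) • hB ((p z) * (p x)) x (p y) + (-5:ℤ) • hA ((p x) * (p z)) (p y) x + (-1:ℤ) • hA ((p z) * (p x)) (p y) x + (2:ℤ) • hB x ((p x) * (p z)) (p y) + (-2:ℤ) • hB x ((p z) * (p x)) (p y) + (-1:ℤ) • hA x (p y) ((p x) * (p z)) + (7:ℤ) • hA x (p y) ((p z) * (p x)) + (-6:ℤ) • hA ((p y) * (p x)) x (p z) + (6:ℤ) • hB ((p y) * (p x)) x (p z) + (-6:ℤ)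 • hA ((p x) * (p y)) x (p z) + (6:ℤ) • hB ((p x) * (p y)) x (p z) + (6:ℤ) • hB x ((p y) * (p x)) (p z) + (6:ℤ) • hB x ((p x) * (p y)) (p z) + (-3:ℤ) • hA ((p z) * x) (p x) (p y) + (2:ℤ) • hB ((p z) * x) (p x) (p y) + (-3:ℤ) • hA (x * (p z)) (p x) (p y) + (10:ℤ) • hB (x * (p z)) (p x) (p y) + (-1:ℤ) • hA ((p z) * x) (p y) (p x) + (-5:ℤ) • hA (x * (p z)) (p y) (p x) + (-2:ℤ) • hB (p x) ((p z) * x) (p y) + (2:ℤ) • hB (p x) (x * (p z)) (p y) + (7:ℤ) • hA (p x) (p y) ((p z) * x) + (-1:ℤ) • hA (p x) (p y) (x * (p z)) + (-6:ℤ) • hA ((p z) * (p y)) x (p x) + (6:ℤ) • hB ((p z) * (p y)) x (p x) + (-6:ℤ) • hA ((p y) * (p z)) x (p x) + (6:ℤ) • hB ((p y) * (p z)) x (p x) + (-6:ℤ) • hA ((p z) * (p y)) (p x) x + (-6:ℤ) • hA ((p y) * (p z)) (p x) x + (-6:ℤ) • hA (x * (p y)) (p x) (p z) + (6:ℤ)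 • hB (x * (p y)) (p x) (p z) + (-6:ℤ) • hA ((p y) * x) (p x) (p z) + (6:ℤ) • hB ((p y) * x) (p x) (p z) + (6:ℤ) • hB (p x) (x * (p y)) (p z) + (6:ℤ) • hB (p x) ((p y) * x) (p z) + (-3:ℤ) • hAL x (p x) (p y) (p z) + (-3:ℤ) • hAR x (p x) (p y) (p z) + (4:ℤ) • hBL x (p x) (p y) (p z) + (-4:ℤ) • hBR x (p x) (p y) (p z) + (-5:ℤ) • hAL x (p x) (p z) (p y) + (-1:ℤ) • hAR x (p x) (p z) (p y) + (2:ℤ) • hBL x (p y) (p x) (p z) + (-2:ℤ) • hBR x (p y) (p x) (p z) + (-7:ℤ) • hAL x (p y) (p z) (p x) + (1:ℤ) • hAR x (p y) (p z) (p x) + (-3:ℤ) • hAL (p x) x (p y) (p z) + (-3:ℤ) • hAR (p x) x (p y) (p z) + (4:ℤ) • hBL (p x) x (p y) (p z) + (-4:ℤ) • hBR (p x) x (p y) (p z) + (-5:ℤ) • hAL (p x) x (p z) (p y) + (-1:ℤ) • hAR (p x) x (p z) (p y) + (2:ℤ) • hBL (p x) (p y) x (p z) + (-2:ℤ) • hBR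 (p x) (p y) x (p z) + (-7:ℤ) • hAL (p x) (p y) (p z) x + (1:ℤ) • hAR (p x) (p y) (p z) x + (6:ℤ) • hAL (p y) x (p x) (p z) + (6:ℤ) • hAR (p y) x (p x) (p z) + (-6:ℤ) • hBL (p y) x (p x) (p z) + (-6:ℤ) • hBR (p y) x (p x) (p z) + (-6:ℤ) • hBL (p y) (p x) x (p z) + (-6:ℤ) • hBR (p y) (p x) x (p z)
  · intro x y z
    simp only [angleBracket, pbr, pbr2]
    simp only [mul_sub, sub_mul, mul_add, add_mul]
    linear_combination (norm := abel1) (-5:ℤ) • hA ((p x) * (p x)) y (p z) + (5:ℤ) • hB ((p x) * (p x)) y (p z) + (5:ℤ) • hB y ((p x) * (p x)) (p z) + (1:ℤ) • hA (y * (p z)) (p x) (p x) + (2:ℤ) • hB (y * (p z)) (p x) (p x) + (-4:ℤ) • hA ((p z) * y) (p x) (p x) + (2:ℤ) • hB ((p z) * y) (p x) (p x) + (5:ℤ) • hB (p x) ((p z) * y) (p x) + (-2:ℤ) • hA ((p x) * (p z)) y (p x) + (2:ℤ) • hB ((p x) * (p z)) y (p x) + (-2:ℤ) • hA ((p z) *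 (p x)) y (p x) + (1:ℤ) • hB ((p z) * (p x)) y (p x) + (-4:ℤ) • hA ((p x) * (p z)) (p x) y + (2:ℤ) • hB y ((p x) * (p z)) (p x) + (-2:ℤ) • hB y ((p z) * (p x)) (p x) + (-1:ℤ) • hA y (p x) ((p x) * (p z)) + (1:ℤ) • hA (y * (p x)) (p x) (p z) + (-1:ℤ) • hB (y * (p x)) (p x) (p z) + (1:ℤ) • hA ((p x) * y) (p x) (p z) + (-1:ℤ) • hB ((p x) * y) (p x) (p z) + (-1:ℤ) • hB (p x) (y * (p x)) (p z) + (-1:ℤ) • hB (p x) ((p x) * y) (p z) + (-3:ℤ) • hAL y (p x) (p x) (p z) + (-3:ℤ) • hAR y (p x) (p x) (p z) + (6:ℤ) • hBL y (p x) (p x) (p z) + (1:ℤ) • hBR y (p x) (p x) (p z) + (-5:ℤ) • hAL y (p x) (p z) (p x) + (3:ℤ) • hAL (p x) y (p x) (p z) + (3:ℤ) • hAR (p x) y (p x) (p z) + (-2:ℤ) • hBL (p x) y (p x) (p z) + (-3:ℤ) • hBR (p x) y (p x) (p z) + (2:ℤ) • hAL (p x) y (p z) (p x) + (-1:ℤ)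 • hAR (p x) y (p z) (p x) + (-4:ℤ) • hBL (p x) (p x) y (p z) + (-1:ℤ) • hBR (p x) (p x) y (p z) + (1:ℤ) • hAR (p x) (p x) (p z) y
  · intro x y z
    simp only [angleBracket, pbr, pbr2]
    simp only [mul_sub, sub_mul, mul_add, add_mul]
    linear_combination (norm := abel1) (2:ℤ) • hA ((p x) * z) (p x) (p y) + (-3:ℤ) • hB ((p x) * z) (p x) (p y) + (2:ℤ) • hA (z * (p x)) (p x) (p y) + (-1:ℤ) • hB (z * (p x)) (p x) (p y) + (-1:ℤ) • hA ((p x) * z) (p y) (p x) + (1:ℤ) • hA (z * (p x)) (p y) (p x) + (-1:ℤ) • hB (p x) ((p x) * z) (p y) + (-3:ℤ) • hB (p x) (z * (p x)) (p y) + (1:ℤ) • hA (p x) (p y) ((p x) * z) + (-1:ℤ) • hA (p x) (p y) (z * (p x)) + (5:ℤ) • hA ((p x) * (p x)) z (p y) + (-5:ℤ) • hB ((p x) * (p x)) z (p y) + (-5:ℤ) • hB z ((p x) * (p x)) (p y) + (-1:ℤ) • hA ((p y) * (p x)) z (p x) + (1:ℤ) • hB ((p y) * (p x)) z (p x) + (-1:ℤ)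 • hA ((p x) * (p y)) z (p x) + (-4:ℤ) • hB ((p x) * (p y)) z (p x) + (-1:ℤ) • hA ((p y) * (p x)) (p x) z + (5:ℤ) • hA ((p x) * (p y)) (p x) z + (6:ℤ) • hB z ((p y) * (p x)) (p x) + (-5:ℤ) • hA z (p x) ((p y) * (p x)) + (10:ℤ) • hA ((p y) * z) (p x) (p x) + (-5:ℤ) • hB ((p y) * z) (p x) (p x) + (5:ℤ) • hA (z * (p y)) (p x) (p x) + (-5:ℤ) • hB (z * (p y)) (p x) (p x) + (-5:ℤ) • hB (p x) ((p y) * z) (p x) + (3:ℤ) • hAL z (p x) (p x) (p y) + (3:ℤ) • hAR z (p x) (p x) (p y) + (-6:ℤ) • hBL z (p x) (p x) (p y) + (-1:ℤ) • hBR z (p x) (p x) (p y) + (5:ℤ) • hAL z (p x) (p y) (p x) + (-3:ℤ) • hAL (p x) z (p x) (p y) + (-3:ℤ) • hAR (p x) z (p x) (p y) + (2:ℤ) • hBL (p x) z (p x) (p y) + (3:ℤ) • hBR (p x) z (p x) (p y) + (4:ℤ) • hAL (p x) z (p y) (p x) + (1:ℤ) • hAR (p x) z (p y) (p x) + (4:ℤ)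 • hBL (p x) (p x) z (p y) + (7:ℤ) • hBR (p x) (p x) z (p y) + (-1:ℤ) • hAR (p x) (p x) (p y) z
end

section
/- Let (M, +, ⟨ , ⟩) be a generalized Malcev algebra over a field k of characteristic not 2 or 3. Let M^ann be the k-linear span of the set {J⟨x, x, y⟩ : x, y ∈ M} ∪ {⟨x, x⟩ : x ∈ M}, where J⟨x, y, z⟩ := ⟨⟨x, y⟩, z⟩ − ⟨x, ⟨y, z⟩⟩ − ⟨⟨x, z⟩, y⟩ is the right Jacobian. Then M^ann is an ideal of M, i.e., ⟨M^ann, M⟩ ⊆ M^ann and ⟨M, M^ann⟩ ⊆ M^ann. -/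
/-- The right Jacobian `J⟨x, y, z⟩ = ⟨⟨x,y⟩,z⟩ − ⟨x,⟨y,z⟩⟩ − ⟨⟨x,z⟩,y⟩`. -/
def rightJacobian {k M : Type*} [Field k] [AddCommGroup M] [Module k M]
    (br : M →ₗ[k] M →ₗ[k] M) (x y z : M) : M :=
  br (br x y) z - br x (br y z) - br (br x z) y

/-- In a generalized Malcev algebra `(M, +, ⟨,⟩)` over a field of characteristic not
`2` or `3`, the annihilator `M^ann = span({J⟨x,x,y⟩} ∪ {⟨x,x⟩})` is an ideal:
`⟨M^ann, M⟩ ⊆ M^ann` and `⟨M, M^ann⟩ ⊆ M^ann`. -/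
theorem annihilator_isIdeal_of_generalizedMalcev
    (k : Type*) [Field k] (h2 : (2 : k) ≠ 0) (h3 : (3 : k) ≠ 0)
    (M : Type*) [AddCommGroup M] [Module k M]
    (br : M →ₗ[k] M →ₗ[k] M)
    -- right anti-commutativity
    (rac : ∀ x y z : M, br x (br y z) = - br x (br z y))
    -- Hu-Liu angle identity (i)
    (hl1 : ∀ x y z : M,
      br (br x y) (br x z) - br (br x z) (br x y)
        = br (br (br x y) z) x - br x (br (br x y) z)
          + br x (br x (br y z)) - br (br x (br y z)) x
          + br (br x (br x z)) y - br (br (br x z) x) y)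
    -- Hu-Liu angle identity (ii)
    (hl2 : ∀ x y z : M,
      br (br y x) (br x z)
        = br (br (br y x) z) x - br y (br (br x z) x) - br (br (br y z) x) x)
    -- Hu-Liu angle identity (iii)
    (hl3 : ∀ x y z : M,
      br (br z x) (br y x)
        = br (br z (br x y)) x + br (br (br z y) x) x - br (br (br z x) x) y)
    (Mann : Submodule k M)
    (hMann : Mann = Submodule.span k
      ({a : M | ∃ x y : M, a = rightJacobian br x x y} ∪ {a : M | ∃ x : M, a = br x x})) :
    ∀ u ∈ Mann, ∀ x : M, br u x ∈ Mann ∧ br x u ∈ Mann := by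
  -- `v + v = 0 → v = 0` since `2 ≠ 0`
  have half : ∀ v : M, v + v = 0 → v = 0 := by
    intro v hv
    have h2v : (2 : k) • v = 0 := by rw [two_smul]; exact hv
    calc v = (2 : k)⁻¹ • ((2 : k) • v) := (inv_smul_smul₀ h2 v).symm
      _ = 0 := by rw [h2v, smul_zero]
  -- `⟨a, ⟨t,t⟩⟩ = 0`
  have bz : ∀ a t : M, br a (br t t) = 0 := by
    intro a t
    apply half
    nth_rewrite 1 [rac a t t]
    exact neg_add_cancel _
  -- generators of `Mann`
  have hsq : ∀ t : M, br t t ∈ Mann := by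
    intro t
    rw [hMann]
    exact Submodule.subset_span (Or.inr ⟨t, rfl⟩)
  have hJm : ∀ a b : M, rightJacobian br a a b ∈ Mann := by
    intro a b
    rw [hMann]
    exact Submodule.subset_span (Or.inl ⟨a, b, rfl⟩)
  -- right multiplication by `Mann` is zero
  have rz : ∀ u m : M, m ∈ Mann → br u m = 0 := by
    intro u m hm
    rw [hMann] at hm
    refine LinearMap.mem_ker.mp (Submodule.span_le.mpr ?_ hm)
    intro a ha
    simp only [Set.mem_union, Set.mem_setOf_eq] at ha
    simp only [SetLike.mem_coe, LinearMap.mem_ker]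
    obtain ⟨t, w, rfl⟩ | ⟨t, rfl⟩ := ha
    · simp only [rightJacobian, map_sub]
      rw [rac u (br t t) w, bz w t, map_zero, rac u t (br t w)]
      abel
    · exact bz u t
  -- symmetric products are in `Mann`
  have hSeq : ∀ a b : M, br a b + br b a = br (a + b) (a + b) - br a a - br b b := by
    intro a b
    simp only [map_add, LinearMap.add_apply]
    abel
  have hS : ∀ a b : M, br a b + br b a ∈ Mann := by
    intro a b
    rw [hSeq a b]
    exact sub_mem (sub_mem (hsq _) (hsq _)) (hsq _)
  -- left multiplication of a square: `⟨⟨t,t⟩,w⟩ ∈ Mann`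
  have hLsq : ∀ t w : M, br (br t t) w ∈ Mann := by
    intro t w
    have e : br (br t t) w = rightJacobian br t t w + (br t (br t w) + br (br t w) t) := by
      simp only [rightJacobian]; abel
    rw [e]
    exact add_mem (hJm t w) (hS t (br t w))
  -- THE KEY FACT : `⟨⟨⟨x,x⟩,y⟩,z⟩ ∈ Mann`
  have key : ∀ x y z : M, br (br (br x x) y) z ∈ Mann := by
    intro x y z
    have r1 : br x (br x (br y z)) = - br x (br x (br z y)) := by
      rw [rac x y z, map_neg]
    have r2 : br y (br z (br x x)) = 0 := by
      rw [bz z x, map_zero]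
    have p1 := hl2 (x + y) x z
    have p2 := hl3 (x + y) z x
    have p3 := hl2 (x + z) x y
    simp only [map_add, LinearMap.add_apply] at p1 p2 p3
    have heq : (4 : k) • br (br (br x x) y) z
        = (4 : k) • (-(br (br x x) (br y z) - br x (br x (br y z)) - br (br x (br y z)) x)
            + (br x (br (br x y) z) + br (br (br x y) z) x)
            - (br x (br (br x z) y) + br (br (br x z) y) x)
            + (br y (br (br x x) z) + br (br (br x x) z) y)) := by
      linear_combination (norm := module)
        (-2 : k) • hl1 x y z + (4 : k) • p1 + (-4 : k) • hl2 x x z + (-4 : k) • hl2 y x z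
        + (2 : k) • p2 + (-2 : k) • hl3 x z x + (-2 : k) • hl3 y z x
        + (-2 : k) • p3 + (2 : k) • hl2 x x y + (2 : k) • hl2 z x y
        + (-4 : k) • rac x x (br y z) + (-2 : k) • r1 + (2 : k) • rac x x (br z y)
        + (-4 : k) • rac y z (br x x) + (4 : k) • r2 + (-2 : k) • rac (br x y) x z
    have h4 : (4 : k) ≠ 0 := by
      have e4 : (4 : k) = 2 * 2 := by norm_num
      rw [e4]; exact mul_ne_zero h2 h2
    have hD : (-(br (br x x) (br y z) - br x (br x (br y z)) - br (br x (br y z)) x)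
            + (br x (br (br x y) z) + br (br (br x y) z) x)
            - (br x (br (br x z) y) + br (br (br x z) y) x)
            + (br y (br (br x x) z) + br (br (br x x) z) y)) ∈ Mann := by
      refine add_mem (sub_mem (add_mem (neg_mem ?_) (hS _ _)) (hS _ _)) (hS _ _)
      exact hJm x (br y z)
    have e : br (br (br x x) y) z = (4 : k)⁻¹ • ((4 : k) • br (br (br x x) y) z) :=
      (inv_smul_smul₀ h4 _).symm
    rw [e, heq]
    exact Submodule.smul_mem _ _ (Submodule.smul_mem _ _ hD)
  -- left multiplication of a symmetric product
  have hSL : ∀ a b c : M, br (br a b + br b a) c ∈ Mann := by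
    intro a b c
    rw [hSeq a b]
    simp only [map_sub, LinearMap.sub_apply]
    exact sub_mem (sub_mem (hLsq _ _) (hLsq _ _)) (hLsq _ _)
  -- left multiplication of a Jacobian generator
  have keyJ : ∀ a b c : M, br (rightJacobian br a a b) c ∈ Mann := by
    intro a b c
    have e : br (rightJacobian br a a b) c
        = br (br (br a a) b) c - br (br a (br a b) + br (br a b) a) c := by
      simp only [rightJacobian, map_sub, map_add, LinearMap.sub_apply, LinearMap.add_apply]
      abel
    rw [e]
    exact sub_mem (key a b c) (hSL a (br a b) c)
  -- conclusion
  intro u hu v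
  constructor
  · rw [hMann] at hu
    have hle : Submodule.span k
        ({a : M | ∃ x y : M, a = rightJacobian br x x y} ∪ {a : M | ∃ x : M, a = br x x})
        ≤ Submodule.comap (br.flip v) Mann := by
      apply Submodule.span_le.mpr
      intro a ha
      simp only [Set.mem_union, Set.mem_setOf_eq] at ha
      simp only [SetLike.mem_coe, Submodule.mem_comap, LinearMap.flip_apply]
      obtain ⟨t, w, rfl⟩ | ⟨t, rfl⟩ := ha
      · exact keyJ t w v
      · exact hLsq t v
    exact Submodule.mem_comap.mp (hle hu)
  · rw [rz v u hu]
    exact zero_mem _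
end

section
/- Let (M, +, ⟨ , ⟩) be a generalized Malcev algebra over a field k of characteristic not 2 or 3, and let M^ann be the k-linear span of {J⟨x, x, y⟩ : x, y ∈ M} ∪ {⟨x, x⟩ : x ∈ M}, where J⟨x, y, z⟩ := ⟨⟨x, y⟩, z⟩ − ⟨x, ⟨y, z⟩⟩ − ⟨⟨x, z⟩, y⟩. Then the quotient M/M^ann, with the induced bracket ⟨x + M^ann, y + M^ann⟩ := ⟨x, y⟩ + M^ann (well defined since M^ann is an ideal), is a Malcev algebra: the induced bracket is anti-commutative and satisfies the Malcev identity ⟨⟨x,y⟩,⟨x,z⟩⟩ = ⟨⟨⟨x,y⟩,z⟩,x⟩ + ⟨⟨⟨y,z⟩,x⟩,x⟩ + ⟨⟨⟨z,x⟩,x⟩,y⟩ in M/M^ann. -/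
/-- For a generalized Malcev algebra `(M, +, ⟨,⟩)` over a field of characteristic
not `2` or `3` with annihilator `M^ann = span({J⟨x,x,y⟩} ∪ {⟨x,x⟩})`, the quotient
`M/M^ann` carries a well-defined induced bilinear bracket `⟨x̄, ȳ⟩ = ⟨x,y⟩‾` which
is anti-commutative and satisfies the Malcev identity, i.e. `M/M^ann` is a Malcev
algebra. -/
theorem quotient_by_annihilator_isMalcev
    (k : Type*) [Field k] (h2 : (2 : k) ≠ 0) (h3 : (3 : k) ≠ 0)
    (M : Type*) [AddCommGroup M] [Module k M]
    (br : M →ₗ[k] M →ₗ[k] M)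
    (rac : ∀ x y z : M, br x (br y z) = - br x (br z y))
    (hl1 : ∀ x y z : M,
      br (br x y) (br x z) - br (br x z) (br x y)
        = br (br (br x y) z) x - br x (br (br x y) z)
          + br x (br x (br y z)) - br (br x (br y z)) x
          + br (br x (br x z)) y - br (br (br x z) x) y)
    (hl2 : ∀ x y z : M,
      br (br y x) (br x z)
        = br (br (br y x) z) x - br y (br (br x z) x) - br (br (br y z) x) x)
    (hl3 : ∀ x y z : M,
      br (br z x) (br y x)
        = br (br z (br x y)) x + br (br (br z y) x) x - br (br (br z x) x) y)
    (Mann : Submodule k M)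
    (hMann : Mann = Submodule.span k
      ({a : M | ∃ x y : M, a = rightJacobian br x x y} ∪ {a : M | ∃ x : M, a = br x x})) :
    ∃ qbr : (M ⧸ Mann) →ₗ[k] (M ⧸ Mann) →ₗ[k] (M ⧸ Mann),
      -- the induced bracket is well defined: computed on representatives
      (∀ x y : M, qbr (Submodule.Quotient.mk x) (Submodule.Quotient.mk y)
          = (Submodule.Quotient.mk (br x y) : M ⧸ Mann)) ∧
      -- anti-commutativity
      (∀ a b : M ⧸ Mann, qbr a b = - qbr b a) ∧
      -- Malcev identity
      (∀ a b c : M ⧸ Mann,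
        qbr (qbr a b) (qbr a c)
          = qbr (qbr (qbr a b) c) a + qbr (qbr (qbr b c) a) a
            + qbr (qbr (qbr c a) a) b) := by
  classical
  -- ⟨a, ⟨b,b⟩⟩ = 0
  have key0 : ∀ a b : M, br a (br b b) = 0 := by
    intro a b
    have h := rac a b b
    have h2s : (2 : k) • br a (br b b) = 0 := by
      rw [two_smul]
      nth_rewrite 2 [h]
      simp
    rcases smul_eq_zero.mp h2s with hc | hc
    · exact absurd hc h2
    · exact hc
  -- ⟨z, ⟨⟨x,x⟩,y⟩⟩ = 0
  have key0' : ∀ z x y : M, br z (br (br x x) y) = 0 := by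
    intro z x y
    rw [rac z (br x x) y, key0 y x]
    simp
  have memSq : ∀ w : M, br w w ∈ Mann := by
    intro w
    rw [hMann]
    exact Submodule.subset_span (Or.inr ⟨w, rfl⟩)
  have memN : ∀ a b : M, br a b + br b a ∈ Mann := by
    intro a b
    have h : br a b + br b a = br (a + b) (a + b) - br a a - br b b := by
      simp only [map_add, LinearMap.add_apply]
      abel
    rw [h]
    exact sub_mem (sub_mem (memSq (a + b)) (memSq a)) (memSq b)
  -- bracketing with annihilator on the right gives 0
  have memLzero : ∀ (z a : M), a ∈ Mann → br z a = 0 := by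
    intro z a ha
    have hle : Mann ≤ LinearMap.ker (br z) := by
      rw [hMann, Submodule.span_le]
      rintro _ (⟨x, y, rfl⟩ | ⟨w, rfl⟩)
      · simp only [SetLike.mem_coe, LinearMap.mem_ker, rightJacobian, map_sub]
        rw [key0' z x y, rac z x (br x y)]
        abel
      · simp only [SetLike.mem_coe, LinearMap.mem_ker]
        exact key0 z w
    exact LinearMap.mem_ker.mp (hle ha)
  -- bracketing with annihilator on the left stays in the annihilator
  have memR : ∀ (a : M), a ∈ Mann → ∀ z : M, br a z ∈ Mann := by
    intro a ha z
    have h0 : br z a = 0 := memLzero z a ha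
    have h1 : br a z = br a z + br z a := by rw [h0, add_zero]
    rw [h1]
    exact memN a z
  -- construct the quotient bracket
  let f : M → (M ⧸ Mann →ₗ[k] M ⧸ Mann) := fun x =>
    Mann.liftQ (Mann.mkQ.comp (br x)) (by
      intro a ha
      simp only [LinearMap.mem_ker, LinearMap.comp_apply, Submodule.mkQ_apply]
      rw [memLzero x a ha]
      simp)
  have hf : ∀ x y : M, f x (Submodule.Quotient.mk y) = Submodule.Quotient.mk (br x y) := by
    intro x y
    simp [f, Submodule.liftQ_apply]
  let F : M →ₗ[k] (M ⧸ Mann →ₗ[k] M ⧸ Mann) :=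
    { toFun := f
      map_add' := by
        intro x x'
        apply LinearMap.ext
        intro q
        obtain ⟨y, rfl⟩ := Submodule.Quotient.mk_surjective _ q
        simp only [hf, LinearMap.add_apply, map_add, Submodule.Quotient.mk_add]
      map_smul' := by
        intro c x
        apply LinearMap.ext
        intro q
        obtain ⟨y, rfl⟩ := Submodule.Quotient.mk_surjective _ q
        simp only [hf, LinearMap.smul_apply, RingHom.id_apply, map_smul,
          Submodule.Quotient.mk_smul] }
  have hFker : ∀ a ∈ Mann, F a = 0 := by
    intro a ha
    apply LinearMap.ext
    intro q
    obtain ⟨y, rfl⟩ := Submodule.Quotient.mk_surjective _ q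
    show f a (Submodule.Quotient.mk y) = 0
    rw [hf, Submodule.Quotient.mk_eq_zero]
    exact memR a ha y
  set qbr : (M ⧸ Mann) →ₗ[k] (M ⧸ Mann) →ₗ[k] (M ⧸ Mann) :=
    Mann.liftQ F (fun a ha => LinearMap.mem_ker.mpr (hFker a ha)) with hqbr
  have hq : ∀ x y : M, qbr (Submodule.Quotient.mk x) (Submodule.Quotient.mk y)
      = (Submodule.Quotient.mk (br x y) : M ⧸ Mann) := by
    intro x y
    rw [hqbr, Submodule.liftQ_apply]
    exact hf x y
  have anti : ∀ a b : M ⧸ Mann, qbr a b = - qbr b a := by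
    intro a b
    obtain ⟨x, rfl⟩ := Submodule.Quotient.mk_surjective _ a
    obtain ⟨y, rfl⟩ := Submodule.Quotient.mk_surjective _ b
    rw [hq, hq, ← Submodule.Quotient.mk_neg, Submodule.Quotient.eq]
    have : br x y - -br y x = br x y + br y x := by abel
    rw [this]
    exact memN x y
  refine ⟨qbr, hq, anti, ?_⟩
  have hneg1 : ∀ u v : M ⧸ Mann, qbr (-u) v = -(qbr u v) := by
    intro u v
    rw [map_neg, LinearMap.neg_apply]
  have hneg2 : ∀ u v : M ⧸ Mann, qbr u (-v) = -(qbr u v) := by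
    intro u v
    rw [map_neg]
  have hl2Q : ∀ a b c : M ⧸ Mann,
      qbr (qbr b a) (qbr a c)
        = qbr (qbr (qbr b a) c) a - qbr b (qbr (qbr a c) a) - qbr (qbr (qbr b c) a) a := by
    intro a b c
    obtain ⟨x, rfl⟩ := Submodule.Quotient.mk_surjective _ a
    obtain ⟨y, rfl⟩ := Submodule.Quotient.mk_surjective _ b
    obtain ⟨z, rfl⟩ := Submodule.Quotient.mk_surjective _ c
    simp only [hq]
    rw [hl2 x y z, Submodule.Quotient.mk_sub, Submodule.Quotient.mk_sub]
  intro a b c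
  have h1 := hl2Q a b c
  have e1 : qbr (qbr b a) (qbr a c) = -(qbr (qbr a b) (qbr a c)) := by
    rw [anti b a, hneg1]
  have e2 : qbr (qbr (qbr b a) c) a = -(qbr (qbr (qbr a b) c) a) := by
    rw [anti b a, hneg1, hneg1]
  have e3 : qbr b (qbr (qbr a c) a) = qbr (qbr (qbr c a) a) b := by
    rw [anti a c, hneg1, hneg2, anti b (qbr (qbr c a) a), neg_neg]
  linear_combination (norm := module) e1 - h1 - e2 + e3
end

section
/- Let (M, +, ⟨ , ⟩) be a generalized Malcev algebra over a field k of characteristic not 2 or 3, and let M^ann be the k-linear span of {J⟨x, x, y⟩ : x, y ∈ M} ∪ {⟨x, x⟩ : x ∈ M}, where J⟨x, y, z⟩ := ⟨⟨x, y⟩, z⟩ − ⟨x, ⟨y, z⟩⟩ − ⟨⟨x, z⟩, y⟩. On the vector space E := (M/M^ann) × M^ann define the bracket [(x̄, a), (ȳ, b)] := (⟨x, y⟩ + M^ann, ⟨a, y⟩ − ⟨b, x⟩), where x̄ = x + M^ann and ȳ = y + M^ann. Then this bracket is well defined (independent of the chosen representatives x and y), and E is a Malcev algebra: the bracket is bilinear,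 anti-commutative, and satisfies the Malcev identity [[X,Y],[X,Z]] = [[[X,Y],Z],X] + [[[Y,Z],X],X] + [[[Z,X],X],Y] for all X, Y, Z ∈ E. (Equivalently, M^ann is a module over the Malcev algebra M/M^ann under the action x̄·a = −a·x̄ := −⟨a, x⟩.) -/
set_option maxHeartbeats 4000000 in
/-- For a generalized Malcev algebra `(M, +, ⟨,⟩)` over a field of characteristic
not `2` or `3` with annihilator `M^ann = span({J⟨x,x,y⟩} ∪ {⟨x,x⟩})`, the split
null extension `E = (M/M^ann) × M^ann` with bracket
`[(x̄,a),(ȳ,b)] = (⟨x,y⟩‾, ⟨a,y⟩ − ⟨b,x⟩)` is well defined and is a Malcev algebra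
(equivalently, `M^ann` is a module over the Malcev algebra `M/M^ann` via
`x̄·a = −a·x̄ = −⟨a,x⟩`). -/
theorem split_null_extension_isMalcev
    (k : Type*) [Field k] (h2 : (2 : k) ≠ 0) (h3 : (3 : k) ≠ 0)
    (M : Type*) [AddCommGroup M] [Module k M]
    (br : M →ₗ[k] M →ₗ[k] M)
    (rac : ∀ x y z : M, br x (br y z) = - br x (br z y))
    (hl1 : ∀ x y z : M,
      br (br x y) (br x z) - br (br x z) (br x y)
        = br (br (br x y) z) x - br x (br (br x y) z)
          + br x (br x (br y z)) - br (br x (br y z)) x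
          + br (br x (br x z)) y - br (br (br x z) x) y)
    (hl2 : ∀ x y z : M,
      br (br y x) (br x z)
        = br (br (br y x) z) x - br y (br (br x z) x) - br (br (br y z) x) x)
    (hl3 : ∀ x y z : M,
      br (br z x) (br y x)
        = br (br z (br x y)) x + br (br (br z y) x) x - br (br (br z x) x) y)
    (Mann : Submodule k M)
    (hMann : Mann = Submodule.span k
      ({a : M | ∃ x y : M, a = rightJacobian br x x y} ∪ {a : M | ∃ x : M, a = br x x})) :
    ∃ ebr : ((M ⧸ Mann) × Mann) →ₗ[k] ((M ⧸ Mann) × Mann) →ₗ[k] ((M ⧸ Mann) × Mann),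
      -- well defined, given on representatives by `[(x̄,a),(ȳ,b)] = (⟨x,y⟩‾, ⟨a,y⟩ − ⟨b,x⟩)`
      (∀ (x y : M) (a b : Mann),
        (ebr (Submodule.Quotient.mk x, a) (Submodule.Quotient.mk y, b)).1
            = (Submodule.Quotient.mk (br x y) : M ⧸ Mann) ∧
        ((ebr (Submodule.Quotient.mk x, a) (Submodule.Quotient.mk y, b)).2 : M)
            = br (a : M) y - br (b : M) x) ∧
      -- anti-commutativity
      (∀ X Y : (M ⧸ Mann) × Mann, ebr X Y = - ebr Y X) ∧
      -- Malcev identity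
      (∀ X Y Z : (M ⧸ Mann) × Mann,
        ebr (ebr X Y) (ebr X Z)
          = ebr (ebr (ebr X Y) Z) X + ebr (ebr (ebr Y Z) X) X
            + ebr (ebr (ebr Z X) X) Y) := by
  
  -- basic membership lemmas
  have sq_mem : ∀ x : M, br x x ∈ Mann := fun x =>
    hMann ▸ Submodule.subset_span (Or.inr ⟨x, rfl⟩)
  have jac_mem : ∀ x y : M, rightJacobian br x x y ∈ Mann := fun x y =>
    hMann ▸ Submodule.subset_span (Or.inl ⟨x, y, rfl⟩)
  have sym_mem : ∀ x y : M, br x y + br y x ∈ Mann := by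
    intro x y
    have h := Submodule.sub_mem _ (Submodule.sub_mem _ (sq_mem (x+y)) (sq_mem x)) (sq_mem y)
    have e : br (x+y) (x+y) - br x x - br y y = br x y + br y x := by
      simp only [map_add, LinearMap.add_apply]; abel
    rwa [e] at h
  have racsq : ∀ u x : M, br u (br x x) = 0 := by
    intro u x
    have h := rac u x x
    have h' : (2:k) • br u (br x x) = 0 := by
      linear_combination (norm := module) h
    simpa [smul_eq_zero, h2] using h'
  have ann_right : ∀ a : M, a ∈ Mann → ∀ u : M, br u a = 0 := by
    intro a ha u
    rw [hMann] at ha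
    have hle : Submodule.span k
        ({a : M | ∃ x y : M, a = rightJacobian br x x y} ∪ {a : M | ∃ x : M, a = br x x})
        ≤ LinearMap.ker (br u) := by
      rw [Submodule.span_le]
      rintro _ (⟨x, y, rfl⟩ | ⟨x, rfl⟩)
      · simp only [SetLike.mem_coe, LinearMap.mem_ker, rightJacobian, map_sub]
        rw [rac u (br x x) y, racsq, map_zero, rac u x (br x y)]
        abel
      · simp only [SetLike.mem_coe, LinearMap.mem_ker]; exact racsq u x
    exact hle ha
  have sqleft_mem : ∀ x y : M, br (br x x) y ∈ Mann := by
    intro x y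
    have e : br (br x x) y = rightJacobian br x x y + (br x (br x y) + br (br x y) x) := by
      simp only [rightJacobian]; abel
    rw [e]; exact Submodule.add_mem _ (jac_mem x y) (sym_mem x (br x y))
  have symleft_mem : ∀ u v w : M, br (br u v) w + br (br v u) w ∈ Mann := by
    intro u v w
    have e : br (br u v) w + br (br v u) w
        = br (br (u+v) (u+v)) w - br (br u u) w - br (br v v) w := by
      simp only [map_add, LinearMap.add_apply]; abel
    rw [e]
    exact Submodule.sub_mem _ (Submodule.sub_mem _ (sqleft_mem (u+v) w) (sqleft_mem u w))
      (sqleft_mem v w)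
  have sqleft2_mem : ∀ x y z : M, br (br (br x x) y) z ∈ Mann := by
    intro x y z
    have h := symleft_mem (br x x) y z
    rwa [racsq y x, LinearMap.map_zero₂, add_zero] at h
  have mann_left : ∀ a : M, a ∈ Mann → ∀ y : M, br a y ∈ Mann := by
    intro a ha y
    rw [hMann] at ha
    have hle : Submodule.span k
        ({a : M | ∃ x y : M, a = rightJacobian br x x y} ∪ {a : M | ∃ x : M, a = br x x})
        ≤ Submodule.comap (br.flip y) Mann := by
      rw [Submodule.span_le]
      rintro _ (⟨x, w, rfl⟩ | ⟨x, rfl⟩)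
      · simp only [SetLike.mem_coe, Submodule.mem_comap, LinearMap.flip_apply]
        have e : br (rightJacobian br x x w) y
            = br (br (br x x) w) y - (br (br x (br x w)) y + br (br (br x w) x) y) := by
          simp only [rightJacobian, map_sub, LinearMap.sub_apply]; abel
        rw [e]
        exact Submodule.sub_mem _ (sqleft2_mem x w y) (symleft_mem x (br x w) y)
      · simp only [SetLike.mem_coe, Submodule.mem_comap, LinearMap.flip_apply]
        exact sqleft_mem x y
    exact hle ha
  -- Malcev identity modulo Mann
  have mal_mem : ∀ x y z : M, br (br x y) (br x z) - br (br (br x y) z) x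
      - br (br (br y z) x) x - br (br (br z x) x) y ∈ Mann := by
    intro x y z
    have hrsq0 : br y (br z (br x x)) = 0 := by rw [racsq z x]; exact map_zero _
    have hrsq1 : br (br z (br x x)) y = 0 := by rw [racsq z x]; exact LinearMap.map_zero₂ _ _
    have hma2 : br x (br (br y x) z) + br x (br (br x y) z) = 0 := by
      have h := ann_right _ (symleft_mem y x z) x; rwa [map_add] at h
    have hma3 : br x (br (br x z) y) + br x (br (br z x) y) = 0 := by
      have h := ann_right _ (symleft_mem x z y) x; rwa [map_add] at h
    have H4 := hl1 (y + x) z x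
    have H5 := hl1 (x + y) x z
    have H6 := hl1 (z + y) x x
    have H7 := hl2 (y + x) z x
    have H8 := hl3 (x + y) x z
    have H9 := hl3 (z + y) x x
    simp only [map_add, LinearMap.add_apply] at H4 H5 H6 H7 H8 H9
    have hmu : (2:k) • (br (br (br x x) z) y + br (br z (br x x)) y)
        + (-2:k) • (br (br z (br x y)) x + br x (br z (br x y)))
        + (-2:k) • (br (br (br x y) z) x + br x (br (br x y) z))
        + (-2:k) • (br (br (br y z) x) x + br x (br (br y z) x))
        + (-2:k) • (br (br (br z x) x) y + br y (br (br z x) x))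
        + (2:k) • (br (br (br y x) x) z + br (br x (br y x)) z)
        + (-2:k) • (br (br (br y x) z) x + br (br z (br y x)) x)
        + (-2:k) • (br (br y (br x z)) x + br (br (br x z) y) x) ∈ Mann := by
      refine Submodule.add_mem _ (Submodule.add_mem _ (Submodule.add_mem _ (Submodule.add_mem _
        (Submodule.add_mem _ (Submodule.add_mem _ (Submodule.add_mem _
        (Submodule.smul_mem _ _ (symleft_mem (br x x) z y))
        (Submodule.smul_mem _ _ (sym_mem (br z (br x y)) x)))
        (Submodule.smul_mem _ _ (sym_mem (br (br x y) z) x)))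
        (Submodule.smul_mem _ _ (sym_mem (br (br y z) x) x)))
        (Submodule.smul_mem _ _ (sym_mem (br (br z x) x) y)))
        (Submodule.smul_mem _ _ (symleft_mem (br y x) x z)))
        (Submodule.smul_mem _ _ (symleft_mem (br y x) z x)))
        (Submodule.smul_mem _ _ (symleft_mem y (br x z) x))
    have heq : (2:k) • (br (br x y) (br x z) - br (br (br x y) z) x - br (br (br y z) x) x
        - br (br (br z x) x) y)
        = (2:k) • (br (br (br x x) z) y + br (br z (br x x)) y)
        + (-2:k) • (br (br z (br x y)) x + br x (br z (br x y)))
        + (-2:k) • (br (br (br x y) z) x + br x (br (br x y) z))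
        + (-2:k) • (br (br (br y z) x) x + br x (br (br y z) x))
        + (-2:k) • (br (br (br z x) x) y + br y (br (br z x) x))
        + (2:k) • (br (br (br y x) x) z + br (br x (br y x)) z)
        + (-2:k) • (br (br (br y x) z) x + br (br z (br y x)) x)
        + (-2:k) • (br (br y (br x z)) x + br (br (br x z) y) x) := by
      linear_combination (norm := module)
        (2:k) • (rac (br y x) x z)
        - (1:k) • (rac y (br x x) z)
        + (1:k) • (rac y (br x z) x)
        + (1:k) • (rac y x (br z x))
        + (2:k) • (rac (br z y) x x)
        + (1:k) • (rac x y (br x z))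
        + (1:k) • (rac x y (br z x))
        + (1:k) • (rac x x (br y z))
        + (2:k) • (rac x (br x y) z)
        + (3:k) • (rac (br z x) y x)
        + (1:k) • (rac z (br x x) y)
        + (2:k) • hrsq0
        - (6:k) • hrsq1
        - (1:k) • hma2
        - (1:k) • hma3
        + (1:k) • (hl1 x y z)
        + (1:k) • (H4 - hl1 y z x - hl1 x z x)
        + (1:k) • (H5 - hl1 x x z - hl1 y x z)
        + (1:k) • (H6 - hl1 z x x - hl1 y x x)
        - (2:k) • (hl2 x y z)
        - (1:k) • (H7 - hl2 y z x - hl2 x z x)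
        - (2:k) • (hl3 x y z)
        - (3:k) • (H8 - hl3 x x z - hl3 y x z)
        + (1:k) • (H9 - hl3 z x x - hl3 y x x)
        - (2:k) • (hl3 x z y)
    rw [← Submodule.smul_mem_iff _ h2, heq]
    exact hmu
  -- the exact second-component identity
  have secid : ∀ x y z aM bM cM : M, aM ∈ Mann → bM ∈ Mann → cM ∈ Mann →
      br (br aM y) (br x z) - br (br bM x) (br x z) - br (br aM z) (br x y)
        + br (br cM x) (br x y)
      = (br (br (br aM y) z) x - br (br (br bM x) z) x - br (br cM (br x y)) x
          - br aM (br (br x y) z))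
        + (br (br (br bM z) x) x - br (br (br cM y) x) x - br (br aM (br y z)) x
          - br aM (br (br y z) x))
        + (br (br (br cM x) x) y - br (br (br aM z) x) y - br (br aM (br z x)) y
          - br bM (br (br z x) x)) := by
    intro x y z aM bM cM ha hb hc
    have ka1 : ∀ u : M, br u aM = 0 := fun u => ann_right aM ha u
    have ka2 : ∀ u v : M, br u (br aM v) = 0 := fun u v =>
      ann_right _ (mann_left aM ha v) u
    have ka3 : ∀ u v w : M, br u (br (br aM v) w) = 0 := fun u v w =>
      ann_right _ (mann_left _ (mann_left aM ha v) w) u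
    have HA := hl1 (x + aM) y z
    simp only [map_add, LinearMap.add_apply] at HA
    simp only [ka1, ka2, ka3, map_zero, LinearMap.map_zero₂, add_zero, zero_add, sub_zero,
      zero_sub, neg_zero] at HA
    have ea : br (br aM (br z x)) y = - br (br aM (br x z)) y := by
      rw [rac aM z x, LinearMap.map_neg₂]
    have eb2 : br bM (br x (br x z)) = - br bM (br x (br z x)) := by
      rw [rac x x z, map_neg]
    linear_combination (norm := module)
      HA - hl1 x y z + rac aM (br y z) x + ea
      - hl2 x bM z + rac bM (br x z) x + rac bM (br z x) x - eb2
      + rac (br cM x) x y - hl3 x y cM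
  -- construct the quotient bracket
  have hker1 : ∀ x : M, Mann ≤ LinearMap.ker ((Mann.mkQ).comp (br x)) := by
    intro x m hm
    simp only [LinearMap.mem_ker, LinearMap.comp_apply, Submodule.mkQ_apply,
      ann_right m hm x, Submodule.Quotient.mk_eq_zero]
    exact Submodule.zero_mem _
  obtain ⟨F, hF⟩ : ∃ F : M →ₗ[k] ((M ⧸ Mann) →ₗ[k] (M ⧸ Mann)),
      ∀ x y : M, F x (Submodule.Quotient.mk y) = Submodule.Quotient.mk (br x y) := by
    refine ⟨⟨⟨fun x => Mann.liftQ ((Mann.mkQ).comp (br x)) (hker1 x), ?_⟩, ?_⟩, ?_⟩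
    · intro x₁ x₂
      apply LinearMap.ext; intro q
      obtain ⟨y, rfl⟩ := Submodule.Quotient.mk_surjective Mann q
      simp [Submodule.liftQ_apply, map_add]
    · intro c x
      apply LinearMap.ext; intro q
      obtain ⟨y, rfl⟩ := Submodule.Quotient.mk_surjective Mann q
      simp [Submodule.liftQ_apply, map_smul]
    · intro x y
      simp [Submodule.liftQ_apply]
  obtain ⟨qbr, hqbr⟩ : ∃ q : (M ⧸ Mann) →ₗ[k] (M ⧸ Mann) →ₗ[k] (M ⧸ Mann),
      ∀ x y : M, q (Submodule.Quotient.mk x) (Submodule.Quotient.mk y)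
        = Submodule.Quotient.mk (br x y) := by
    refine ⟨Mann.liftQ F ?_, ?_⟩
    · intro m hm
      simp only [LinearMap.mem_ker]
      apply LinearMap.ext; intro q
      obtain ⟨y, rfl⟩ := Submodule.Quotient.mk_surjective Mann q
      rw [hF]
      simp only [LinearMap.zero_apply, Submodule.Quotient.mk_eq_zero]
      exact mann_left m hm y
    · intro x y
      rw [Submodule.liftQ_apply, hF]
  -- construct the right action of M/Mann on Mann
  obtain ⟨ract, hract⟩ : ∃ r : Mann →ₗ[k] (M ⧸ Mann) →ₗ[k] Mann,
      ∀ (a : Mann) (y : M), (r a (Submodule.Quotient.mk y) : M) = br (a : M) y := by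
    have hker2 : ∀ a : Mann, Mann ≤ LinearMap.ker
        (LinearMap.codRestrict Mann (br (a : M)) (fun y => mann_left _ a.2 y)) := by
      intro a m hm
      simp only [LinearMap.mem_ker]
      apply Subtype.ext
      simp [LinearMap.codRestrict_apply, ann_right m hm (a : M)]
    refine ⟨⟨⟨fun a => Mann.liftQ _ (hker2 a), ?_⟩, ?_⟩, ?_⟩
    · intro a₁ a₂
      apply LinearMap.ext; intro q
      obtain ⟨y, rfl⟩ := Submodule.Quotient.mk_surjective Mann q
      apply Subtype.ext
      simp [Submodule.liftQ_apply, LinearMap.codRestrict_apply, map_add,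
        LinearMap.add_apply, LinearMap.map_add₂]
    · intro c a
      apply LinearMap.ext; intro q
      obtain ⟨y, rfl⟩ := Submodule.Quotient.mk_surjective Mann q
      apply Subtype.ext
      simp [Submodule.liftQ_apply, LinearMap.codRestrict_apply, LinearMap.map_smul₂]
    · intro a y
      simp [Submodule.liftQ_apply, LinearMap.codRestrict_apply]
  -- assemble the bracket on the split null extension
  obtain ⟨ebr, hebr⟩ : ∃ e : ((M ⧸ Mann) × Mann) →ₗ[k] ((M ⧸ Mann) × Mann) →ₗ[k]
      ((M ⧸ Mann) × Mann),
      ∀ X Y : (M ⧸ Mann) × Mann,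
        e X Y = (qbr X.1 Y.1, ract X.2 Y.1 - ract Y.2 X.1) := by
    refine ⟨LinearMap.mk₂ k
      (fun X Y => (qbr X.1 Y.1, ract X.2 Y.1 - ract Y.2 X.1)) ?_ ?_ ?_ ?_, fun X Y => rfl⟩
    · intro X X' Y
      refine Prod.ext ?_ ?_ <;>
        simp only [Prod.fst_add, Prod.snd_add, map_add, LinearMap.add_apply] <;> abel
    · intro cc X Y
      refine Prod.ext ?_ ?_ <;>
        simp only [Prod.smul_fst, Prod.smul_snd, map_smul, LinearMap.smul_apply, smul_sub]
    · intro X Y Y'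
      refine Prod.ext ?_ ?_ <;>
        simp only [Prod.fst_add, Prod.snd_add, map_add, LinearMap.add_apply] <;> abel
    · intro cc X Y
      refine Prod.ext ?_ ?_ <;>
        simp only [Prod.smul_fst, Prod.smul_snd, map_smul, LinearMap.smul_apply, smul_sub]
  refine ⟨ebr, ?_, ?_, ?_⟩
  · -- representative formula
    intro x y a b
    rw [hebr]
    refine ⟨hqbr x y, ?_⟩
    show ((ract a (Submodule.Quotient.mk y) - ract b (Submodule.Quotient.mk x) : Mann) : M) = _
    rw [AddSubgroupClass.coe_sub, hract, hract]
  · -- anti-commutativity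
    rintro ⟨x1, a⟩ ⟨y1, b⟩
    obtain ⟨x, rfl⟩ := Submodule.Quotient.mk_surjective Mann x1
    obtain ⟨y, rfl⟩ := Submodule.Quotient.mk_surjective Mann y1
    rw [hebr, hebr, Prod.neg_mk]
    refine Prod.ext ?_ ?_
    · show qbr (Submodule.Quotient.mk x) (Submodule.Quotient.mk y)
        = - qbr (Submodule.Quotient.mk y) (Submodule.Quotient.mk x)
      rw [hqbr, hqbr, ← Submodule.Quotient.mk_neg]
      refine (Submodule.Quotient.eq _).mpr ?_
      simpa [sub_neg_eq_add] using sym_mem x y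
    · exact (neg_sub _ _).symm
  · -- Malcev identity
    rintro ⟨x1, a⟩ ⟨y1, b⟩ ⟨z1, c⟩
    obtain ⟨x, rfl⟩ := Submodule.Quotient.mk_surjective Mann x1
    obtain ⟨y, rfl⟩ := Submodule.Quotient.mk_surjective Mann y1
    obtain ⟨z, rfl⟩ := Submodule.Quotient.mk_surjective Mann z1
    refine Prod.ext ?_ ?_
    · simp only [hebr, hqbr, Prod.fst_add]
      rw [← Submodule.Quotient.mk_add, ← Submodule.Quotient.mk_add]
      refine (Submodule.Quotient.eq _).mpr ?_
      have h := mal_mem x y z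
      have e : br (br x y) (br x z) - br (br (br x y) z) x - br (br (br y z) x) x
          - br (br (br z x) x) y
          = br (br x y) (br x z)
            - (br (br (br x y) z) x + br (br (br y z) x) x + br (br (br z x) x) y) := by
        abel
      rwa [e] at h
    · apply Subtype.ext
      simp only [hebr, hqbr, Prod.snd_add, AddSubgroupClass.coe_sub, Submodule.coe_add,
        hract, map_sub, LinearMap.sub_apply]
      linear_combination (norm := module) secid x y z (a : M) (b : M) (c : M) a.2 b.2 c.2
end
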